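/- Let ⟨M, ⋆, R, γ, η, ε⟩ be a right-monoidal category whose underlying category M is complete, let 𝐐 be the canonical lax comonad on the category 𝓔 of left E-objects constructed from the joint equalizers ζ^n_M : φ𝐐_nM → Q^nφM, and let ⟨φ, ζ⟩ be the associated morphism of lax comonads from ⟨𝓔, 𝐐⟩ to ⟨M, Q⟩. Then the induced functor φ̂ : 𝓔^𝐐 → M^Q, sending a 𝐐-comodule ⟨M, α⟩ to ⟨φM, (ζ^n_M∘φα_n)_{n≥0}⟩ (equivalently to the Q-comodule with coaction ζ^1_M∘φα_1), is an equivalence of categories between the category of 𝐐-comodules and the Eilenberg–Moore category of Q-comodules. -/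

import Mathlib

open CategoryTheory

universe v u

/-- A right-monoidal (skew-monoidal) category structure on a category `C`
with unit object `R`: a product `⋆`, a skew-associator `γ`, a unit `η` and
a counit `ε`, none of which is assumed invertible, subject to the pentagon
and the four (co)unit axioms. -/
structure RightMonoidalStruct (C : Type u) [Category.{v} C] (R : C) where
  smp : C → C → C
  smpHom : ∀ {X X' Y Y' : C}, (X ⟶ X') → (Y ⟶ Y') → (smp X Y ⟶ smp X' Y')
  smpHom_id : ∀ (X Y : C), smpHom (𝟙 X) (𝟙 Y) = 𝟙 (smp X Y)
  smpHom_comp : ∀ {X X' X'' Y Y' Y'' : C} (f : X ⟶ X') (f' : X' ⟶ X'')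
      (g : Y ⟶ Y') (g' : Y' ⟶ Y''),
      smpHom (f ≫ f') (g ≫ g') = smpHom f g ≫ smpHom f' g'
  γ : ∀ (L M N : C), smp L (smp M N) ⟶ smp (smp L M) N
  η : ∀ (M : C), M ⟶ smp R M
  ε : ∀ (M : C), smp M R ⟶ M
  γ_natural : ∀ {L L' M M' N N' : C} (f : L ⟶ L') (g : M ⟶ M') (h : N ⟶ N'),
      smpHom f (smpHom g h) ≫ γ L' M' N' = γ L M N ≫ smpHom (smpHom f g) h
  η_natural : ∀ {M M' : C} (f : M ⟶ M'), f ≫ η M' = η M ≫ smpHom (𝟙 R) f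
  ε_natural : ∀ {M M' : C} (f : M ⟶ M'), smpHom f (𝟙 R) ≫ ε M' = ε M ≫ f
  pentagon : ∀ (K L M N : C),
      smpHom (𝟙 K) (γ L M N) ≫ γ K (smp L M) N ≫ smpHom (γ K L M) (𝟙 N)
        = γ K L (smp M N) ≫ γ (smp K L) M N
  unit_triangle : ∀ (M N : C), η (smp M N) ≫ γ R M N = smpHom (η M) (𝟙 N)
  counit_triangle : ∀ (M N : C), γ M N R ≫ ε (smp M N) = smpHom (𝟙 M) (ε N)
  mixed_triangle : ∀ (M N : C),
      smpHom (𝟙 M) (η N) ≫ γ M R N ≫ smpHom (ε M) (𝟙 N) = 𝟙 (smp M N)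
  unit_counit : η R ≫ ε R = 𝟙 R


variable {C : Type u} [Category.{v} C] {R : C}

/-- The multiplication `μ_M := (ε_R ⋆ M) ∘ γ_{R,R,M}` of the canonical monad `T = R ⋆ -`. -/
def RightMonoidalStruct.μ (S : RightMonoidalStruct C R) (M : C) :
    S.smp R (S.smp R M) ⟶ S.smp R M :=
  S.γ R R M ≫ S.smpHom (S.ε R) (𝟙 M)

/-- The comultiplication `δ_M := γ_{M,R,R} ∘ (M ⋆ η_R)` of the canonical comonad `Q = - ⋆ R`. -/
def RightMonoidalStruct.δ (S : RightMonoidalStruct C R) (M : C) :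
    S.smp M R ⟶ S.smp (S.smp M R) R :=
  S.smpHom (𝟙 M) (S.η R) ≫ S.γ M R R


/-- The canonical right `E`-action (`E = End R`) on a right-monoidal product. -/
def rhoAct (S : RightMonoidalStruct C R) (X Y : C) (r : R ⟶ R) :
    S.smp X Y ⟶ S.smp X Y :=
  S.smpHom (𝟙 X) (S.η Y) ≫ S.smpHom (𝟙 X) (S.smpHom r (𝟙 Y)) ≫
    S.γ X R Y ≫ S.smpHom (S.ε X) (𝟙 Y)

/-- A left `E`-object in `C`, where `E = End R`: an object together with a
monoid morphism `E → End X`. -/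
structure EObject (S : RightMonoidalStruct C R) where
  X : C
  act : (R ⟶ R) → (X ⟶ X)
  act_id : act (𝟙 R) = 𝟙 X
  act_comp : ∀ r r' : R ⟶ R, act (r ≫ r') = act r ≫ act r'

/-- The category `𝓔` of left `E`-objects, with `E`-equivariant arrows. -/
instance (S : RightMonoidalStruct C R) : Category (EObject S) where
  Hom A B := { t : A.X ⟶ B.X // ∀ r : R ⟶ R, A.act r ≫ t = t ≫ B.act r }
  id A := ⟨𝟙 A.X, fun r => by simp⟩
  comp {A B D'} f g := ⟨f.1 ≫ g.1, fun r => by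
    rw [← Category.assoc, f.2 r, Category.assoc, g.2 r, ← Category.assoc]⟩
  id_comp f := Subtype.ext (Category.id_comp f.1)
  comp_id f := Subtype.ext (Category.comp_id f.1)
  assoc f g h := Subtype.ext (Category.assoc f.1 g.1 h.1)

/-- The unit object `R` as a left `E`-object (with the tautological action). -/
def Runit (S : RightMonoidalStruct C R) : EObject S where
  X := R
  act r := r
  act_id := rfl
  act_comp _ _ := rfl

/-- Iterated application of the canonical comonad `Q = - ⋆ R`:
`Qpow n X = (…(X ⋆ R) ⋆ … ) ⋆ R` with `n` factors of `R`. -/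
def Qpow (S : RightMonoidalStruct C R) : ℕ → C → C
  | 0, X => X
  | n+1, X => S.smp (Qpow S n X) R

/-- `Q^k` applied to a morphism. -/
def Qiter (S : RightMonoidalStruct C R) :
    (k : ℕ) → ∀ {X Y : C}, (X ⟶ Y) → (Qpow S k X ⟶ Qpow S k Y)
  | 0, _, _, f => f
  | k+1, _, _, f => S.smpHom (Qiter S k f) (𝟙 R)

/-- `Q^m Q^n = Q^{m+n}`. -/
theorem Qpow_comp (S : RightMonoidalStruct C R) (m n : ℕ) (X : C) :
    Qpow S m (Qpow S n X) = Qpow S (m + n) X := by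
  induction m with
  | zero => rw [Nat.zero_add]; rfl
  | succ m ih =>
      show S.smp (Qpow S m (Qpow S n X)) R = _
      rw [ih, Nat.succ_add]
      rfl

/-- The face-type structure maps of the strict lax comonad determined by `Q`:
`dS n i : Q^{n+1} → Q^{n+2}` is `Q^i δ Q^{n-i}` (here `i ≤ n` counts the number
of outer `Q`'s). -/
def dS (S : RightMonoidalStruct C R) : (n i : ℕ) → (X : C) →
    (Qpow S (n+1) X ⟶ Qpow S (n+2) X)
  | n, 0, X => S.δ (Qpow S n X)
  | 0, _+1, X => S.δ (Qpow S 0 X)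
  | n+1, i+1, X => S.smpHom (dS S n i X) (𝟙 R)

/-- `eS n i : Q^{n+1} → Q^n` is `Q^i ε Q^{n-i}` (with `i ≤ n` outer `Q`'s). -/
def eS (S : RightMonoidalStruct C R) : (n i : ℕ) → (X : C) →
    (Qpow S (n+1) X ⟶ Qpow S n X)
  | n, 0, X => S.ε (Qpow S n X)
  | 0, _+1, X => S.ε (Qpow S 0 X)
  | n+1, i+1, X => S.smpHom (eS S n i X) (𝟙 R)

/-- The left `E`-action `λ_j` on the `j`-th operand (counted from the left,
`0`-based; the `0`-th operand is `M` itself, acted on via `λ_M`) of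
`Q^n(φM) = (…(M ⋆ R) ⋆ …) ⋆ R`. -/
def lamAt (S : RightMonoidalStruct C R) :
    (n j : ℕ) → (M : EObject S) → (R ⟶ R) → (Qpow S n M.X ⟶ Qpow S n M.X)
  | 0, _, M, r => M.act r
  | n+1, j, M, r =>
      if j = n + 1 then S.smpHom (𝟙 (Qpow S n M.X)) r
      else S.smpHom (lamAt S n j M r) (𝟙 R)

/-- The canonical right `E`-action `ρ_i` at the `i`-th `⋆` (counted from the
left, `0`-based) of `Q^{n+1} X`. -/
def rhoAtQ (S : RightMonoidalStruct C R) :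
    (n i : ℕ) → (X : C) → (R ⟶ R) → (Qpow S (n+1) X ⟶ Qpow S (n+1) X)
  | 0, _, X, r => rhoAct S X R r
  | n+1, i, X, r =>
      if i = n + 1 then rhoAct S (Qpow S (n+1) X) R r
      else S.smpHom (rhoAtQ S n i X r) (𝟙 R)

/-- `ρ_i` on `Q^n X`, with junk value the identity when `n = 0`. -/
def rhoAt' (S : RightMonoidalStruct C R) :
    (n i : ℕ) → (X : C) → (R ⟶ R) → (Qpow S n X ⟶ Qpow S n X)
  | 0, _, X, _ => 𝟙 X
  | n+1, i, X, r => rhoAtQ S n i X r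

/-- Bare endofunctor data on a category. -/
structure EndoData (E : Type*) [Category E] where
  obj : E → E
  map : ∀ {X Y : E}, (X ⟶ Y) → (obj X ⟶ obj Y)
  map_id : ∀ X : E, map (𝟙 X) = 𝟙 (obj X)
  map_comp : ∀ {X Y Z : E} (f : X ⟶ Y) (g : Y ⟶ Z), map (f ≫ g) = map f ≫ map g

/-- A lax comonad on `E`, i.e. a monoidal functor `Δ^op → End E` from the
(augmented) simplex category with ordinal sum, presented by the generating
maps: endofunctors `G n`, transformations `d n i : G (n+1) → G (n+2)` (the
images of the surjections `[n+2] → [n+1]` of `Δ`, `i ≤ n`) and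
`e n i : G (n+1) → G n` (the images of the injections `[n] → [n+1]`, `i ≤ n`)
subject to the simplicial identities, together with the monoidal structure
`ν m n : G m ∘ G n → G (m+n)` and `ι : id → G 0` subject to associativity,
unitality and naturality in `(m, n) ∈ Δ^op × Δ^op`. -/
structure LaxComonadStr {E : Type*} [Category E] (G : ℕ → EndoData E) where
  d : ∀ (n i : ℕ) (X : E), (G (n+1)).obj X ⟶ (G (n+2)).obj X
  e : ∀ (n i : ℕ) (X : E), (G (n+1)).obj X ⟶ (G n).obj X
  ν : ∀ (m n : ℕ) (X : E), (G m).obj ((G n).obj X) ⟶ (G (m+n)).obj X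
  ι : ∀ X : E, X ⟶ (G 0).obj X
  d_natural : ∀ (n i : ℕ) {X Y : E} (f : X ⟶ Y), i ≤ n →
      (G (n+1)).map f ≫ d n i Y = d n i X ≫ (G (n+2)).map f
  e_natural : ∀ (n i : ℕ) {X Y : E} (f : X ⟶ Y), i ≤ n →
      (G (n+1)).map f ≫ e n i Y = e n i X ≫ (G n).map f
  ν_natural : ∀ (m n : ℕ) {X Y : E} (f : X ⟶ Y),
      (G m).map ((G n).map f) ≫ ν m n Y = ν m n X ≫ (G (m+n)).map f
  ι_natural : ∀ {X Y : E} (f : X ⟶ Y), f ≫ ι Y = ι X ≫ (G 0).map f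
  dd : ∀ (n i j : ℕ) (X : E), i ≤ j → j ≤ n →
      d n j X ≫ d (n+1) i X = d n i X ≫ d (n+1) (j+1) X
  ee : ∀ (n i j : ℕ) (X : E), i ≤ j → j ≤ n →
      e (n+1) (j+1) X ≫ e n i X = e (n+1) i X ≫ e n j X
  de₁ : ∀ (n i j : ℕ) (X : E), i ≤ j → j ≤ n →
      d (n+1) (j+1) X ≫ e (n+2) i X = e (n+1) i X ≫ d n j X
  de₂ : ∀ (n j : ℕ) (X : E), j ≤ n → d n j X ≫ e (n+1) j X = 𝟙 ((G (n+1)).obj X)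
  de₃ : ∀ (n j : ℕ) (X : E), j ≤ n → d n j X ≫ e (n+1) (j+1) X = 𝟙 ((G (n+1)).obj X)
  de₄ : ∀ (n i j : ℕ) (X : E), j < i → i ≤ n + 1 →
      d (n+1) j X ≫ e (n+2) (i+1) X = e (n+1) i X ≫ d n j X
  ν_assoc : ∀ (l m n : ℕ) (X : E),
      ν l m ((G n).obj X) ≫ ν (l+m) n X
        = (G l).map (ν m n X) ≫ ν l (m+n) X
            ≫ eqToHom (congrArg (fun k => (G k).obj X) (by omega : l + (m + n) = l + m + n))
  ν_unit_left : ∀ (n : ℕ) (X : E),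
      ι ((G n).obj X) ≫ ν 0 n X
        = eqToHom (congrArg (fun k => (G k).obj X) (by omega : n = 0 + n))
  ν_unit_right : ∀ (m : ℕ) (X : E),
      (G m).map (ι X) ≫ ν m 0 X = 𝟙 ((G m).obj X)
  ν_d_left : ∀ (m n i : ℕ) (X : E), i ≤ m →
      ν (m+1) n X
          ≫ eqToHom (congrArg (fun k => (G k).obj X) (by omega : m + 1 + n = m + n + 1))
          ≫ d (m+n) i X
        = d m i ((G n).obj X) ≫ ν (m+2) n X
            ≫ eqToHom (congrArg (fun k => (G k).obj X) (by omega : m + 2 + n = m + n + 2))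
  ν_d_right : ∀ (m n j : ℕ) (X : E), j ≤ n →
      ν m (n+1) X ≫ d (m+n) (m+j) X = (G m).map (d n j X) ≫ ν m (n+2) X
  ν_e_left : ∀ (m n i : ℕ) (X : E), i ≤ m →
      ν (m+1) n X
          ≫ eqToHom (congrArg (fun k => (G k).obj X) (by omega : m + 1 + n = m + n + 1))
          ≫ e (m+n) i X
        = e m i ((G n).obj X) ≫ ν m n X
  ν_e_right : ∀ (m n j : ℕ) (X : E), j ≤ n →
      ν m (n+1) X ≫ e (m+n) (m+j) X = (G m).map (e n j X) ≫ ν m n X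

/-- A comodule (Eilenberg–Moore coalgebra) over the canonical comonad
`Q = ⟨- ⋆ R, δ, ε⟩` of a right-monoidal category. -/
structure QComod (S : RightMonoidalStruct C R) where
  X : C
  coact : X ⟶ S.smp X R
  coassoc : coact ≫ S.smpHom coact (𝟙 R) = coact ≫ S.δ X
  counit : coact ≫ S.ε X = 𝟙 X

/-- The Eilenberg–Moore category `M^Q` of `Q`-comodules. -/
instance (S : RightMonoidalStruct C R) : Category (QComod S) where
  Hom A B := { t : A.X ⟶ B.X // A.coact ≫ S.smpHom t (𝟙 R) = t ≫ B.coact }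
  id A := ⟨𝟙 A.X, by simp [S.smpHom_id]⟩
  comp {A B D'} f g := ⟨f.1 ≫ g.1, by
    have : S.smpHom (f.1 ≫ g.1) (𝟙 R) = S.smpHom f.1 (𝟙 R) ≫ S.smpHom g.1 (𝟙 R) := by
      rw [← S.smpHom_comp]; simp
    rw [this, ← Category.assoc, f.2, Category.assoc, g.2, ← Category.assoc]⟩
  id_comp f := Subtype.ext (Category.id_comp f.1)
  comp_id f := Subtype.ext (Category.comp_id f.1)
  assoc f g h := Subtype.ext (Category.assoc f.1 g.1 h.1)

/-- A comodule over a lax comonad `G : Δ^op → End E`: an object with coactions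
`α_n : X → G_n X` compatible with the simplicial maps, the monoidal structure
`ν` and the unit `ι`. -/
structure LaxComod {E : Type*} [Category E] {G : ℕ → EndoData E}
    (Lc : LaxComonadStr G) where
  pt : E
  α : ∀ n : ℕ, pt ⟶ (G n).obj pt
  compat_d : ∀ n i : ℕ, i ≤ n → α (n+1) ≫ Lc.d n i pt = α (n+2)
  compat_e : ∀ n i : ℕ, i ≤ n → α (n+1) ≫ Lc.e n i pt = α n
  compat_ν : ∀ m n : ℕ, α m ≫ (G m).map (α n) ≫ Lc.ν m n pt = α (m+n)
  compat_ι : α 0 = Lc.ι pt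

/-- The Eilenberg–Moore category `E^G` of comodules over a lax comonad. -/
instance {E : Type*} [Category E] {G : ℕ → EndoData E} (Lc : LaxComonadStr G) :
    Category (LaxComod Lc) where
  Hom A B := { t : A.pt ⟶ B.pt // ∀ n : ℕ, t ≫ B.α n = A.α n ≫ (G n).map t }
  id A := ⟨𝟙 A.pt, fun n => by simp [(G n).map_id]⟩
  comp {A B D'} f g := ⟨f.1 ≫ g.1, fun n => by
    rw [(G n).map_comp, Category.assoc, g.2 n, ← Category.assoc, f.2 n, Category.assoc]⟩
  id_comp f := Subtype.ext (Category.id_comp f.1)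
  comp_id f := Subtype.ext (Category.comp_id f.1)
  assoc f g h := Subtype.ext (Category.assoc f.1 g.1 h.1)

attribute [reducible] Qpow

section AuxLemmas
variable (S : RightMonoidalStruct C R)

lemma smpHom_comp_l {X Y Z W : C} (f : X ⟶ Y) (g : Y ⟶ Z) :
    S.smpHom (f ≫ g) (𝟙 W) = S.smpHom f (𝟙 W) ≫ S.smpHom g (𝟙 W) := by
  rw [← S.smpHom_comp]; simp

lemma smpHom_comp_r {X Y Z W : C} (f : X ⟶ Y) (g : Y ⟶ Z) :
    S.smpHom (𝟙 W) (f ≫ g) = S.smpHom (𝟙 W) f ≫ S.smpHom (𝟙 W) g := by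
  rw [← S.smpHom_comp]; simp

lemma smpHom_exch {X X' Y Y' : C} (f : X ⟶ X') (g : Y ⟶ Y') :
    S.smpHom f (𝟙 Y) ≫ S.smpHom (𝟙 X') g = S.smpHom (𝟙 X) g ≫ S.smpHom f (𝟙 Y') := by
  rw [← S.smpHom_comp, ← S.smpHom_comp]; simp

lemma delta_counit (Y : C) : S.δ Y ≫ S.ε (S.smp Y R) = 𝟙 (S.smp Y R) := by
  unfold RightMonoidalStruct.δ
  rw [Category.assoc, S.counit_triangle, ← S.smpHom_comp]
  simp [S.unit_counit, S.smpHom_id]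

lemma delta_rho (Y : C) (r : R ⟶ R) :
    S.δ Y ≫ S.smpHom (𝟙 (S.smp Y R)) r = S.smpHom (𝟙 Y) r ≫ S.δ Y := by
  unfold RightMonoidalStruct.δ
  have h := S.γ_natural (𝟙 Y) (𝟙 R) r
  rw [S.smpHom_id] at h
  rw [Category.assoc, ← h, ← Category.assoc, ← S.smpHom_comp]
  have h2 : S.η R ≫ S.smpHom (𝟙 R) r = r ≫ S.η R := (S.η_natural r).symm
  rw [Category.id_comp, h2, ← Category.assoc, ← smpHom_comp_r]

lemma delta_nat {A B : C} (f : A ⟶ B) :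
    S.smpHom f (𝟙 R) ≫ S.δ B = S.δ A ≫ S.smpHom (S.smpHom f (𝟙 R)) (𝟙 R) := by
  unfold RightMonoidalStruct.δ
  have h := S.γ_natural f (𝟙 R) (𝟙 R)
  rw [S.smpHom_id] at h
  rw [← Category.assoc, smpHom_exch S f (S.η R), Category.assoc, h]
  simp [Category.assoc]

lemma delta_coassoc (Y : C) :
    S.δ Y ≫ S.smpHom (S.δ Y) (𝟙 R) = S.δ Y ≫ S.δ (S.smp Y R) := by
  have nat1 : S.γ Y R R ≫ S.smpHom (𝟙 (S.smp Y R)) (S.η R)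
      = S.smpHom (𝟙 Y) (S.smpHom (𝟙 R) (S.η R)) ≫ S.γ Y R (S.smp R R) := by
    have h := S.γ_natural (𝟙 Y) (𝟙 R) (S.η R); rw [S.smpHom_id] at h; exact h.symm
  have pent := S.pentagon Y R R R
  have hη : S.η R ≫ S.smpHom (𝟙 R) (S.η R) ≫ S.γ R R R
      = S.η R ≫ S.smpHom (S.η R) (𝟙 R) := by
    rw [← Category.assoc, ← S.η_natural (S.η R), Category.assoc, S.unit_triangle]
  have nat2 : S.smpHom (𝟙 Y) (S.smpHom (S.η R) (𝟙 R)) ≫ S.γ Y (S.smp R R) R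
      = S.γ Y R R ≫ S.smpHom (S.smpHom (𝟙 Y) (S.η R)) (𝟙 R) :=
    S.γ_natural (𝟙 Y) (S.η R) (𝟙 R)
  calc S.δ Y ≫ S.smpHom (S.δ Y) (𝟙 R)
      = S.smpHom (𝟙 Y) (S.η R) ≫ S.γ Y R R ≫ S.smpHom (S.smpHom (𝟙 Y) (S.η R)) (𝟙 R)
          ≫ S.smpHom (S.γ Y R R) (𝟙 R) := by
        unfold RightMonoidalStruct.δ
        rw [smpHom_comp_l]
        simp [Category.assoc]
    _ = S.smpHom (𝟙 Y) (S.η R) ≫ S.smpHom (𝟙 Y) (S.smpHom (S.η R) (𝟙 R))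
          ≫ S.γ Y (S.smp R R) R ≫ S.smpHom (S.γ Y R R) (𝟙 R) := by
        rw [← Category.assoc (S.γ Y R R), ← nat2]
        simp [Category.assoc]
    _ = S.smpHom (𝟙 Y) (S.η R ≫ S.smpHom (S.η R) (𝟙 R))
          ≫ S.γ Y (S.smp R R) R ≫ S.smpHom (S.γ Y R R) (𝟙 R) := by
        rw [smpHom_comp_r]; simp [Category.assoc]
    _ = S.smpHom (𝟙 Y) (S.η R ≫ S.smpHom (𝟙 R) (S.η R) ≫ S.γ R R R)
          ≫ S.γ Y (S.smp R R) R ≫ S.smpHom (S.γ Y R R) (𝟙 R) := by rw [hη]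
    _ = S.smpHom (𝟙 Y) (S.η R) ≫ S.smpHom (𝟙 Y) (S.smpHom (𝟙 R) (S.η R))
          ≫ S.smpHom (𝟙 Y) (S.γ R R R) ≫ S.γ Y (S.smp R R) R
          ≫ S.smpHom (S.γ Y R R) (𝟙 R) := by
        rw [smpHom_comp_r, smpHom_comp_r]; simp [Category.assoc]
    _ = S.smpHom (𝟙 Y) (S.η R) ≫ S.smpHom (𝟙 Y) (S.smpHom (𝟙 R) (S.η R))
          ≫ S.γ Y R (S.smp R R) ≫ S.γ (S.smp Y R) R R := by rw [← pent]
    _ = S.smpHom (𝟙 Y) (S.η R) ≫ S.γ Y R R ≫ S.smpHom (𝟙 (S.smp Y R)) (S.η R)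
          ≫ S.γ (S.smp Y R) R R := by
        slice_lhs 2 3 => rw [← nat1]
        simp [Category.assoc]
    _ = S.δ Y ≫ S.δ (S.smp Y R) := by
        unfold RightMonoidalStruct.δ; simp [Category.assoc]

/-- `actOf Δ r = Δ ≫ (1 ⋆ r) ≫ ε`. -/
def actOf {X : C} (Δ : X ⟶ S.smp X R) (r : R ⟶ R) : X ⟶ X :=
  Δ ≫ S.smpHom (𝟙 X) r ≫ S.ε X

lemma key {X : C} (Δ : X ⟶ S.smp X R)
    (hco : Δ ≫ S.smpHom Δ (𝟙 R) = Δ ≫ S.δ X) (r : R ⟶ R) :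
    Δ ≫ S.smpHom (actOf S Δ r) (𝟙 R) = Δ ≫ rhoAct S X R r := by
  have nat : S.γ X R R ≫ S.smpHom (S.smpHom (𝟙 X) r) (𝟙 R)
      = S.smpHom (𝟙 X) (S.smpHom r (𝟙 R)) ≫ S.γ X R R := (S.γ_natural (𝟙 X) r (𝟙 R)).symm
  calc Δ ≫ S.smpHom (actOf S Δ r) (𝟙 R)
      = Δ ≫ S.smpHom Δ (𝟙 R) ≫ S.smpHom (S.smpHom (𝟙 X) r) (𝟙 R)
          ≫ S.smpHom (S.ε X) (𝟙 R) := by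
        unfold actOf; rw [smpHom_comp_l, smpHom_comp_l]
    _ = Δ ≫ S.δ X ≫ S.smpHom (S.smpHom (𝟙 X) r) (𝟙 R) ≫ S.smpHom (S.ε X) (𝟙 R) := by
        rw [← Category.assoc, hco, Category.assoc]
    _ = Δ ≫ S.smpHom (𝟙 X) (S.η R) ≫ S.smpHom (𝟙 X) (S.smpHom r (𝟙 R))
          ≫ S.γ X R R ≫ S.smpHom (S.ε X) (𝟙 R) := by
        unfold RightMonoidalStruct.δ
        rw [Category.assoc, ← Category.assoc (S.γ X R R), nat]
        simp [Category.assoc]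
    _ = Δ ≫ rhoAct S X R r := by unfold rhoAct; rfl

lemma cofree_act (Y : C) (r : R ⟶ R) :
    actOf S (S.δ Y) r = S.smpHom (𝟙 Y) r := by
  unfold actOf
  rw [← Category.assoc, delta_rho, Category.assoc, delta_counit, Category.comp_id]

lemma key_cofree (Y : C) (r : R ⟶ R) :
    S.δ Y ≫ S.smpHom (S.smpHom (𝟙 Y) r) (𝟙 R)
      = S.δ Y ≫ rhoAct S (S.smp Y R) R r := by
  have h := key S (S.δ Y) (delta_coassoc S Y) r
  rwa [cofree_act] at h

/-- Iterated coaction. -/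
def cIt {X : C} (Δ : X ⟶ S.smp X R) : (n : ℕ) → (X ⟶ Qpow S n X)
  | 0 => 𝟙 X
  | n+1 => Δ ≫ S.smpHom (cIt Δ n) (𝟙 R)

@[simp] lemma cIt_zero {X : C} (Δ : X ⟶ S.smp X R) : cIt S Δ 0 = 𝟙 X := rfl

lemma cIt_succ {X : C} (Δ : X ⟶ S.smp X R) (n : ℕ) :
    cIt S Δ (n+1) = Δ ≫ S.smpHom (cIt S Δ n) (𝟙 R) := rfl

lemma cIt_one {X : C} (Δ : X ⟶ S.smp X R) : cIt S Δ 1 = Δ := by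
  rw [cIt_succ, cIt_zero, S.smpHom_id, Category.comp_id]

@[simp] lemma Qiter_id (k : ℕ) (X : C) : Qiter S k (𝟙 X) = 𝟙 (Qpow S k X) := by
  induction k with
  | zero => rfl
  | succ k ih =>
      show S.smpHom (Qiter S k (𝟙 X)) (𝟙 R) = _
      rw [ih, S.smpHom_id]

lemma Qiter_succ {X Y : C} (k : ℕ) (f : X ⟶ Y) :
    Qiter S (k+1) f = S.smpHom (Qiter S k f) (𝟙 R) := rfl

lemma Qiter_comp (k : ℕ) {X Y Z : C} (f : X ⟶ Y) (g : Y ⟶ Z) :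
    Qiter S k (f ≫ g) = Qiter S k f ≫ Qiter S k g := by
  induction k with
  | zero => rfl
  | succ k ih =>
      show S.smpHom (Qiter S k (f ≫ g)) (𝟙 R) = _
      rw [ih, smpHom_comp_l]; rfl

lemma cIt_delta {X : C} (Δ : X ⟶ S.smp X R)
    (hco : Δ ≫ S.smpHom Δ (𝟙 R) = Δ ≫ S.δ X) (n : ℕ) :
    cIt S Δ (n+2) = cIt S Δ (n+1) ≫ S.δ (Qpow S n X) := by
  calc cIt S Δ (n+2)
      = Δ ≫ S.smpHom Δ (𝟙 R) ≫ S.smpHom (S.smpHom (cIt S Δ n) (𝟙 R)) (𝟙 R) := by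
        rw [cIt_succ, cIt_succ, smpHom_comp_l]
    _ = Δ ≫ S.δ X ≫ S.smpHom (S.smpHom (cIt S Δ n) (𝟙 R)) (𝟙 R) := by
        rw [← Category.assoc, hco, Category.assoc]
    _ = Δ ≫ S.smpHom (cIt S Δ n) (𝟙 R) ≫ S.δ (Qpow S n X) := by
        rw [delta_nat]
    _ = cIt S Δ (n+1) ≫ S.δ (Qpow S n X) := by rw [cIt_succ, Category.assoc]

lemma cIt_dS {X : C} (Δ : X ⟶ S.smp X R)
    (hco : Δ ≫ S.smpHom Δ (𝟙 R) = Δ ≫ S.δ X) :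
    ∀ i n : ℕ, i ≤ n → cIt S Δ (n+1) ≫ dS S n i X = cIt S Δ (n+2) := by
  intro i
  induction i with
  | zero =>
      intro n _
      simp only [dS]
      rw [cIt_delta S Δ hco]
  | succ i ih =>
      intro n hn
      obtain ⟨m, rfl⟩ : ∃ m, n = m + 1 := ⟨n - 1, by omega⟩
      simp only [dS]
      rw [cIt_succ, Category.assoc, ← smpHom_comp_l, ih m (by omega), ← cIt_succ]

lemma cIt_eS {X : C} (Δ : X ⟶ S.smp X R)
    (hco : Δ ≫ S.smpHom Δ (𝟙 R) = Δ ≫ S.δ X) (hcu : Δ ≫ S.ε X = 𝟙 X) :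
    ∀ i n : ℕ, i ≤ n → cIt S Δ (n+1) ≫ eS S n i X = cIt S Δ n := by
  intro i
  induction i with
  | zero =>
      intro n _
      simp only [eS]
      rw [cIt_succ, Category.assoc, S.ε_natural, ← Category.assoc, hcu, Category.id_comp]
  | succ i ih =>
      intro n hn
      obtain ⟨m, rfl⟩ : ∃ m, n = m + 1 := ⟨n - 1, by omega⟩
      simp only [eS]
      rw [cIt_succ, Category.assoc, ← smpHom_comp_l, ih m (by omega), ← cIt_succ]

lemma cIt_cast {X : C} (Δ : X ⟶ S.smp X R) {a b : ℕ} (h : a = b)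
    (e : Qpow S a X = Qpow S b X) : cIt S Δ a ≫ eqToHom e = cIt S Δ b := by
  subst h; simp

lemma smpHom_eqToHom {A B : C} (h : A = B) :
    S.smpHom (eqToHom h) (𝟙 R) = eqToHom (congrArg (fun Z => S.smp Z R) h) := by
  subst h; simp [S.smpHom_id]

lemma cIt_nu {X : C} (Δ : X ⟶ S.smp X R) :
    ∀ (m k : ℕ) (e : Qpow S m (Qpow S k X) = Qpow S (m+k) X),
      cIt S Δ m ≫ Qiter S m (cIt S Δ k) ≫ eqToHom e = cIt S Δ (m+k) := by
  intro m
  induction m with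
  | zero =>
      intro k e
      show 𝟙 X ≫ cIt S Δ k ≫ eqToHom e = cIt S Δ (0+k)
      rw [Category.id_comp]
      exact cIt_cast S Δ (Nat.zero_add k).symm e
  | succ m ih =>
      intro k e
      have e0 := Qpow_comp S m k X
      have h1 : cIt S Δ m ≫ Qiter S m (cIt S Δ k) = cIt S Δ (m+k) ≫ eqToHom e0.symm := by
        rw [← ih k e0]
        simp [Category.assoc]
      calc cIt S Δ (m+1) ≫ Qiter S (m+1) (cIt S Δ k) ≫ eqToHom e
          = Δ ≫ S.smpHom (cIt S Δ m ≫ Qiter S m (cIt S Δ k)) (𝟙 R) ≫ eqToHom e := by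
            rw [cIt_succ, Qiter_succ, smpHom_comp_l]
            simp [Category.assoc]
        _ = Δ ≫ S.smpHom (cIt S Δ (m+k)) (𝟙 R) ≫ S.smpHom (eqToHom e0.symm) (𝟙 R)
              ≫ eqToHom e := by rw [h1, smpHom_comp_l]; simp [Category.assoc]
        _ = cIt S Δ (m+k+1) ≫ eqToHom (congrArg (fun Z => S.smp Z R) e0.symm)
              ≫ eqToHom e := by rw [smpHom_eqToHom, cIt_succ]; simp [Category.assoc]
        _ = cIt S Δ (m+k+1) ≫ eqToHom ((congrArg (fun Z => S.smp Z R) e0.symm).trans e) := by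
              rw [eqToHom_trans]
        _ = cIt S Δ (m+1+k) := cIt_cast S Δ (by omega) _

lemma cIt_nu_one {X : C} (Δ : X ⟶ S.smp X R) (n : ℕ)
    (e : Qpow S n (S.smp X R) = Qpow S (n+1) X) :
    cIt S Δ n ≫ Qiter S n Δ ≫ eqToHom e = cIt S Δ (n+1) := by
  have h := cIt_nu S Δ n 1 e
  rw [cIt_one] at h
  exact h

lemma act_equivariant {X₁ X₂ : C} (Δ₁ : X₁ ⟶ S.smp X₁ R) (Δ₂ : X₂ ⟶ S.smp X₂ R)
    (f : X₁ ⟶ X₂) (hf : Δ₁ ≫ S.smpHom f (𝟙 R) = f ≫ Δ₂) (r : R ⟶ R) :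
    actOf S Δ₁ r ≫ f = f ≫ actOf S Δ₂ r := by
  unfold actOf
  calc (Δ₁ ≫ S.smpHom (𝟙 X₁) r ≫ S.ε X₁) ≫ f
      = Δ₁ ≫ S.smpHom (𝟙 X₁) r ≫ S.smpHom f (𝟙 R) ≫ S.ε X₂ := by
        simp only [Category.assoc]
        rw [← S.ε_natural f]
    _ = Δ₁ ≫ S.smpHom f (𝟙 R) ≫ S.smpHom (𝟙 X₂) r ≫ S.ε X₂ := by
        slice_lhs 2 3 => rw [← smpHom_exch]
        simp [Category.assoc]
    _ = f ≫ Δ₂ ≫ S.smpHom (𝟙 X₂) r ≫ S.ε X₂ := by rw [reassoc_of% hf]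

lemma iso_cond1 {X W : C} (a : X ⟶ W) (b : W ⟶ S.smp X R) (c : X ⟶ S.smp X R)
    (hab : a ≫ b = c) :
    (a ≫ b) ≫ S.smpHom (𝟙 X) (𝟙 R) = 𝟙 X ≫ c := by
  rw [S.smpHom_id, Category.comp_id, Category.id_comp, hab]

lemma iso_cond2 {X W : C} (a : X ⟶ W) (b : W ⟶ S.smp X R) (c : X ⟶ S.smp X R)
    (hab : a ≫ b = c) :
    c ≫ S.smpHom (𝟙 X) (𝟙 R) = 𝟙 X ≫ a ≫ b := by
  rw [S.smpHom_id, Category.comp_id, Category.id_comp, hab]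

lemma eqToHom_conj {X W : C} (g : X ⟶ W) (f : W ⟶ S.smp X R) (p : X = X) (q : X = X) :
    g ≫ f = eqToHom p ≫ g ≫ f ≫ S.smpHom (eqToHom q) (𝟙 R) := by
  simp [S.smpHom_id]

lemma eqToHom_conj2 {X Y : C} (f : X ⟶ Y) (p : X = X) (q : Y = Y) :
    f = eqToHom p ≫ f ≫ eqToHom q := by simp

lemma actOf_coact {X : C} (Δ : X ⟶ S.smp X R)
    (hco : Δ ≫ S.smpHom Δ (𝟙 R) = Δ ≫ S.δ X) (r : R ⟶ R) :
    actOf S Δ r ≫ Δ = Δ ≫ S.smpHom (𝟙 X) r := by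
  have hε : S.ε X ≫ Δ = S.smpHom Δ (𝟙 R) ≫ S.ε (S.smp X R) := (S.ε_natural Δ).symm
  calc actOf S Δ r ≫ Δ
      = Δ ≫ S.smpHom (𝟙 X) r ≫ S.smpHom Δ (𝟙 R) ≫ S.ε (S.smp X R) := by
        unfold actOf; rw [← hε]; simp [Category.assoc]
    _ = Δ ≫ S.smpHom Δ (𝟙 R) ≫ S.smpHom (𝟙 (S.smp X R)) r ≫ S.ε (S.smp X R) := by
        slice_lhs 2 3 => rw [← smpHom_exch]
        simp [Category.assoc]
    _ = Δ ≫ S.δ X ≫ S.smpHom (𝟙 (S.smp X R)) r ≫ S.ε (S.smp X R) := by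
        rw [← Category.assoc, hco, Category.assoc]
    _ = Δ ≫ S.smpHom (𝟙 X) r ≫ S.δ X ≫ S.ε (S.smp X R) := by
        slice_lhs 2 3 => rw [delta_rho]
        simp [Category.assoc]
    _ = Δ ≫ S.smpHom (𝟙 X) r := by rw [delta_counit, Category.comp_id]

lemma actOf_id {X : C} (Δ : X ⟶ S.smp X R) (hcu : Δ ≫ S.ε X = 𝟙 X) :
    actOf S Δ (𝟙 R) = 𝟙 X := by
  unfold actOf; rw [S.smpHom_id, Category.id_comp, hcu]

lemma actOf_comp {X : C} (Δ : X ⟶ S.smp X R)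
    (hco : Δ ≫ S.smpHom Δ (𝟙 R) = Δ ≫ S.δ X) (r r' : R ⟶ R) :
    actOf S Δ (r ≫ r') = actOf S Δ r ≫ actOf S Δ r' := by
  have h := actOf_coact S Δ hco r
  calc actOf S Δ (r ≫ r')
      = Δ ≫ S.smpHom (𝟙 X) r ≫ S.smpHom (𝟙 X) r' ≫ S.ε X := by
        unfold actOf; rw [smpHom_comp_r]; simp [Category.assoc]
    _ = (actOf S Δ r ≫ Δ) ≫ S.smpHom (𝟙 X) r' ≫ S.ε X := by
        rw [h]; simp [Category.assoc]
    _ = actOf S Δ r ≫ actOf S Δ r' := by unfold actOf; simp [Category.assoc]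

lemma act_cIt (M : EObject S) (Δ : M.X ⟶ S.smp M.X R)
    (hco : Δ ≫ S.smpHom Δ (𝟙 R) = Δ ≫ S.δ M.X)
    (hact : ∀ r, M.act r = actOf S Δ r) (n : ℕ) (r : R ⟶ R) :
    M.act r ≫ cIt S Δ n = cIt S Δ n ≫ lamAt S n n M r := by
  cases n with
  | zero =>
      have h0 : lamAt S 0 0 M r = M.act r := rfl
      rw [h0, cIt_zero, Category.comp_id, Category.id_comp]
  | succ n =>
      have h1 : lamAt S (n+1) (n+1) M r = S.smpHom (𝟙 (Qpow S n M.X)) r := by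
        rw [lamAt, if_pos rfl]
      rw [h1, cIt_succ, ← Category.assoc, hact, actOf_coact S Δ hco, Category.assoc,
        ← smpHom_exch]
      simp [Category.assoc]

lemma cIt_equalizes (M : EObject S) (Δ : M.X ⟶ S.smp M.X R)
    (hco : Δ ≫ S.smpHom Δ (𝟙 R) = Δ ≫ S.δ M.X)
    (hact : ∀ r, M.act r = actOf S Δ r) :
    ∀ (n j : ℕ) (r : R ⟶ R), j < n →
      cIt S Δ n ≫ lamAt S n j M r = cIt S Δ n ≫ rhoAt' S n j M.X r := by
  intro n
  induction n with
  | zero => intro j r h; omega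
  | succ n ih =>
      intro j r hj
      have hrho : rhoAt' S (n+1) j M.X r = rhoAtQ S n j M.X r := rfl
      rcases Nat.lt_succ_iff_lt_or_eq.mp hj with hlt | heq
      · obtain ⟨m, rfl⟩ : ∃ m, n = m + 1 := ⟨n - 1, by omega⟩
        have hlam : lamAt S (m+2) j M r = S.smpHom (lamAt S (m+1) j M r) (𝟙 R) := by
          rw [lamAt, if_neg (by omega : ¬ j = m + 1 + 1)]
        have hrho2 : rhoAtQ S (m+1) j M.X r = S.smpHom (rhoAtQ S m j M.X r) (𝟙 R) := by
          rw [rhoAtQ, if_neg (by omega : ¬ j = m + 1)]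
        have hrho3 : rhoAt' S (m+1) j M.X r = rhoAtQ S m j M.X r := rfl
        rw [hrho, hlam, hrho2, cIt_succ, Category.assoc, Category.assoc, ← smpHom_comp_l,
          ← smpHom_comp_l, ih j r hlt, hrho3]
      · subst heq
        cases j with
        | zero =>
            have hlam : lamAt S 1 0 M r = S.smpHom (M.act r) (𝟙 R) := by
              rw [lamAt, if_neg (by omega : ¬ (0:ℕ) = 0 + 1)]
              rfl
            have hrho0 : rhoAtQ S 0 0 M.X r = rhoAct S M.X R r := rfl
            rw [hrho, hlam, hrho0, cIt_one, hact]
            exact key S Δ hco r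
        | succ m =>
            have hlam : lamAt S (m+2) (m+1) M r
                = S.smpHom (S.smpHom (𝟙 (Qpow S m M.X)) r) (𝟙 R) := by
              rw [lamAt, if_neg (by omega : ¬ m + 1 = m + 1 + 1), lamAt, if_pos rfl]
            have hrho2 : rhoAtQ S (m+1) (m+1) M.X r
                = rhoAct S (Qpow S (m+1) M.X) R r := by
              rw [rhoAtQ, if_pos rfl]
            rw [hrho, hlam, hrho2, cIt_delta S Δ hco, Category.assoc, Category.assoc,
              key_cofree S (Qpow S m M.X) r]

lemma cIt_map {X₁ X₂ : C} (Δ₁ : X₁ ⟶ S.smp X₁ R) (Δ₂ : X₂ ⟶ S.smp X₂ R)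
    (f : X₁ ⟶ X₂) (hf : Δ₁ ≫ S.smpHom f (𝟙 R) = f ≫ Δ₂) (n : ℕ) :
    f ≫ cIt S Δ₂ n = cIt S Δ₁ n ≫ Qiter S n f := by
  induction n with
  | zero =>
      show f ≫ 𝟙 X₂ = 𝟙 X₁ ≫ f
      simp
  | succ n ih =>
      rw [cIt_succ, cIt_succ, Qiter_succ]
      calc f ≫ Δ₂ ≫ S.smpHom (cIt S Δ₂ n) (𝟙 R)
          = Δ₁ ≫ S.smpHom f (𝟙 R) ≫ S.smpHom (cIt S Δ₂ n) (𝟙 R) := by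
            rw [← Category.assoc, ← hf]; simp [Category.assoc]
        _ = Δ₁ ≫ S.smpHom (cIt S Δ₁ n ≫ Qiter S n f) (𝟙 R) := by
            rw [← smpHom_comp_l, ih]
        _ = (Δ₁ ≫ S.smpHom (cIt S Δ₁ n) (𝟙 R)) ≫ S.smpHom (Qiter S n f) (𝟙 R) := by
            rw [smpHom_comp_l]; simp [Category.assoc]

end AuxLemmas

set_option maxHeartbeats 1600000

/-- Theorem 6.3 of Szlachányi.  For a right-monoidal
category with complete underlying category, the functor `φ̂ : 𝓔^𝐐 → M^Q`
induced by the morphism of lax comonads `⟨φ, ζ⟩` — sending a `𝐐`-comodule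
`⟨M, α⟩` to the `Q`-comodule with underlying object `φM` and coaction
`ζ^1_M ∘ φα_1` — is an equivalence of categories. -/
theorem lax_comodules_equivalence (S : RightMonoidalStruct C R)
    [Limits.HasLimits C]
    (Qb : ℕ → EndoData (EObject S))
    (ζ : ∀ (n : ℕ) (M : EObject S), ((Qb n).obj M).X ⟶ Qpow S n M.X)
    (hζ_nat : ∀ (n : ℕ) {M N : EObject S} (f : M ⟶ N),
        ((Qb n).map f).1 ≫ ζ n N = ζ n M ≫ Qiter S n f.1)
    (hζ_eq : ∀ (n j : ℕ) (M : EObject S) (r : R ⟶ R), j < n →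
        ζ n M ≫ lamAt S n j M r = ζ n M ≫ rhoAt' S n j M.X r)
    (hζ_univ : ∀ (n : ℕ) (M : EObject S) {Y : C} (t : Y ⟶ Qpow S n M.X),
        (∀ (j : ℕ) (r : R ⟶ R), j < n →
          t ≫ lamAt S n j M r = t ≫ rhoAt' S n j M.X r) →
        ∃! u : Y ⟶ ((Qb n).obj M).X, u ≫ ζ n M = t)
    (hζ_act : ∀ (n : ℕ) (M : EObject S) (r : R ⟶ R),
        ((Qb n).obj M).act r ≫ ζ n M = ζ n M ≫ lamAt S n n M r)
    (Lc : LaxComonadStr Qb)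
    (hd : ∀ (n i : ℕ) (M : EObject S), i ≤ n →
        (Lc.d n i M).1 ≫ ζ (n+2) M = ζ (n+1) M ≫ dS S n i M.X)
    (he : ∀ (n i : ℕ) (M : EObject S), i ≤ n →
        (Lc.e n i M).1 ≫ ζ n M = ζ (n+1) M ≫ eS S n i M.X)
    (hν : ∀ (m n : ℕ) (M : EObject S),
        (Lc.ν m n M).1 ≫ ζ (m+n) M
          = ζ m ((Qb n).obj M) ≫ Qiter S m (ζ n M) ≫ eqToHom (Qpow_comp S m n M.X))
    (hι : ∀ M : EObject S, (Lc.ι M).1 ≫ ζ 0 M = 𝟙 M.X) :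
    ∃ Phat : LaxComod Lc ⥤ QComod S,
      (∃ hobj : ∀ A : LaxComod Lc, (Phat.obj A).X = A.pt.X,
        (∀ A : LaxComod Lc,
            (Phat.obj A).coact
              = eqToHom (hobj A) ≫ (A.α 1).1 ≫ ζ 1 A.pt
                  ≫ S.smpHom (eqToHom (hobj A).symm) (𝟙 R)) ∧
        (∀ {A B : LaxComod Lc} (t : A ⟶ B),
            (Phat.map t).1 = eqToHom (hobj A) ≫ t.1.1 ≫ eqToHom (hobj B).symm)) ∧
      Phat.IsEquivalence := by

  classical
  -- ζ is jointly monic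
  have hmono : ∀ (n : ℕ) (M : EObject S) {Y : C} (u v : Y ⟶ ((Qb n).obj M).X),
      u ≫ ζ n M = v ≫ ζ n M → u = v := by
    intro n M Y u v h
    obtain ⟨w, hw, hq⟩ := hζ_univ n M (v ≫ ζ n M) (fun j r hj => by
      rw [Category.assoc, Category.assoc, hζ_eq n j M r hj])
    rw [hq u h, hq v rfl]
  -- the iterated coaction of a lax comodule
  have halph : ∀ (A : LaxComod Lc) (n : ℕ),
      (A.α n).1 ≫ ζ n A.pt = cIt S ((A.α 1).1 ≫ ζ 1 A.pt) n := by
    intro A n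
    induction n with
    | zero =>
        rw [A.compat_ι, hι A.pt]
        rfl
    | succ n ih =>
        have h1 : (A.α (n+1)).1
            = (A.α n).1 ≫ ((Qb n).map (A.α 1)).1 ≫ (Lc.ν n 1 A.pt).1 := by
          rw [← A.compat_ν n 1]
          rfl
        calc (A.α (n+1)).1 ≫ ζ (n+1) A.pt
            = (A.α n).1 ≫ ((Qb n).map (A.α 1)).1 ≫ (Lc.ν n 1 A.pt).1 ≫ ζ (n+1) A.pt := by
              rw [h1]; simp [Category.assoc]
          _ = (A.α n).1 ≫ ((Qb n).map (A.α 1)).1 ≫ ζ n ((Qb 1).obj A.pt)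
                ≫ Qiter S n (ζ 1 A.pt) ≫ eqToHom (Qpow_comp S n 1 A.pt.X) := by
              rw [hν n 1 A.pt]
          _ = (A.α n).1 ≫ (ζ n A.pt ≫ Qiter S n (A.α 1).1)
                ≫ Qiter S n (ζ 1 A.pt) ≫ eqToHom (Qpow_comp S n 1 A.pt.X) := by
              rw [← Category.assoc (((Qb n).map (A.α 1)).1), hζ_nat n (A.α 1)]
          _ = ((A.α n).1 ≫ ζ n A.pt) ≫ Qiter S n ((A.α 1).1 ≫ ζ 1 A.pt)
                ≫ eqToHom (Qpow_comp S n 1 A.pt.X) := by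
              rw [Qiter_comp]; simp [Category.assoc]
          _ = cIt S ((A.α 1).1 ≫ ζ 1 A.pt) n ≫ Qiter S n ((A.α 1).1 ≫ ζ 1 A.pt)
                ≫ eqToHom (Qpow_comp S n 1 A.pt.X) := by rw [ih]
          _ = cIt S ((A.α 1).1 ≫ ζ 1 A.pt) (n+1) := cIt_nu_one S _ n _
  -- counit law for the induced coaction
  have hcuA : ∀ A : LaxComod Lc, ((A.α 1).1 ≫ ζ 1 A.pt) ≫ S.ε A.pt.X = 𝟙 A.pt.X := by
    intro A
    have he0 := he 0 0 A.pt (le_refl 0)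
    have hc := A.compat_e 0 0 (le_refl 0)
    calc ((A.α 1).1 ≫ ζ 1 A.pt) ≫ S.ε A.pt.X
        = (A.α 1).1 ≫ ζ 1 A.pt ≫ eS S 0 0 A.pt.X := by
          rw [Category.assoc]; rfl
      _ = (A.α 1).1 ≫ (Lc.e 0 0 A.pt).1 ≫ ζ 0 A.pt := by rw [he0]
      _ = (A.α 1 ≫ Lc.e 0 0 A.pt).1 ≫ ζ 0 A.pt := by rw [← Category.assoc]; rfl
      _ = (A.α 0).1 ≫ ζ 0 A.pt := by rw [hc]
      _ = 𝟙 A.pt.X := by rw [A.compat_ι, hι A.pt]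
  -- coassociativity law for the induced coaction
  have hcoA : ∀ A : LaxComod Lc,
      ((A.α 1).1 ≫ ζ 1 A.pt) ≫ S.smpHom ((A.α 1).1 ≫ ζ 1 A.pt) (𝟙 R)
        = ((A.α 1).1 ≫ ζ 1 A.pt) ≫ S.δ A.pt.X := by
    intro A
    have hd0 := hd 0 0 A.pt (le_refl 0)
    have hc := A.compat_d 0 0 (le_refl 0)
    have h2 : ((A.α 1).1 ≫ ζ 1 A.pt) ≫ S.smpHom ((A.α 1).1 ≫ ζ 1 A.pt) (𝟙 R)
        = cIt S ((A.α 1).1 ≫ ζ 1 A.pt) 2 := by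
      rw [cIt_succ, cIt_one]
    have h4 : ((A.α 1).1 ≫ ζ 1 A.pt) ≫ S.δ A.pt.X = (A.α 2).1 ≫ ζ 2 A.pt :=
      calc ((A.α 1).1 ≫ ζ 1 A.pt) ≫ S.δ A.pt.X
          = (A.α 1).1 ≫ ζ 1 A.pt ≫ dS S 0 0 A.pt.X := by
            rw [Category.assoc]; rfl
        _ = (A.α 1).1 ≫ (Lc.d 0 0 A.pt).1 ≫ ζ 2 A.pt := by rw [hd0]
        _ = (A.α 1 ≫ Lc.d 0 0 A.pt).1 ≫ ζ 2 A.pt := by rw [← Category.assoc]; rfl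
        _ = (A.α 2).1 ≫ ζ 2 A.pt := by rw [hc]
    rw [h2, ← halph A 2]
    exact h4.symm
  -- the comparison functor as a coalgebra morphism on homs
  have hmap : ∀ {A B : LaxComod Lc} (t : A ⟶ B),
      ((A.α 1).1 ≫ ζ 1 A.pt) ≫ S.smpHom t.1.1 (𝟙 R)
        = t.1.1 ≫ ((B.α 1).1 ≫ ζ 1 B.pt) := by
    intro A B t
    have h := congrArg Subtype.val (t.2 1)
    calc ((A.α 1).1 ≫ ζ 1 A.pt) ≫ S.smpHom t.1.1 (𝟙 R)
        = (A.α 1).1 ≫ ζ 1 A.pt ≫ Qiter S 1 t.1.1 := by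
          rw [show Qiter S 1 t.1.1 = S.smpHom t.1.1 (𝟙 R) from rfl, Category.assoc]
      _ = (A.α 1).1 ≫ ((Qb 1).map t.1).1 ≫ ζ 1 B.pt := by rw [hζ_nat 1 t.1]
      _ = (t.1.1 ≫ (B.α 1).1) ≫ ζ 1 B.pt := by
          rw [← Category.assoc]
          exact congrArg (· ≫ ζ 1 B.pt) h.symm
      _ = t.1.1 ≫ (B.α 1).1 ≫ ζ 1 B.pt := by rw [Category.assoc]
  -- the action of any lax comodule is determined by its 1-coaction
  have hactA : ∀ (A : LaxComod Lc) (r : R ⟶ R),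
      A.pt.act r = actOf S ((A.α 1).1 ≫ ζ 1 A.pt) r := by
    intro A r
    have h1 := (A.α 1).2 r
    have h2 := hζ_act 1 A.pt r
    have h3 : lamAt S 1 1 A.pt r = S.smpHom (𝟙 A.pt.X) r := by
      rw [lamAt, if_pos rfl]
    calc A.pt.act r
        = (A.pt.act r ≫ (A.α 1).1) ≫ ζ 1 A.pt ≫ S.ε A.pt.X := by
          rw [Category.assoc, ← Category.assoc (A.α 1).1, hcuA A, Category.comp_id]
      _ = (A.α 1).1 ≫ (((Qb 1).obj A.pt).act r ≫ ζ 1 A.pt) ≫ S.ε A.pt.X := by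
          rw [h1]; simp [Category.assoc]
      _ = (A.α 1).1 ≫ (ζ 1 A.pt ≫ lamAt S 1 1 A.pt r) ≫ S.ε A.pt.X := by rw [h2]
      _ = actOf S ((A.α 1).1 ≫ ζ 1 A.pt) r := by
          rw [h3]; unfold actOf; simp [Category.assoc]
  refine ⟨{ obj := fun A => ⟨A.pt.X, (A.α 1).1 ≫ ζ 1 A.pt, hcoA A, hcuA A⟩,
            map := fun {A B} t => ⟨t.1.1, hmap t⟩,
            map_id := fun A => Subtype.ext rfl,
            map_comp := fun f g => Subtype.ext rfl },
          ⟨fun A => rfl, fun A => eqToHom_conj S (A.α 1).1 (ζ 1 A.pt) rfl rfl,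
            fun {A B} t => eqToHom_conj2 t.1.1 rfl rfl⟩, ?_⟩
  refine { faithful := ⟨fun {A B} {t t'} h => by
            have hv := congrArg Subtype.val h
            exact Subtype.ext (Subtype.ext hv)⟩,
           full := ⟨?_⟩, essSurj := ⟨?_⟩ }
  · -- fullness
    intro A B s
    let sv : A.pt.X ⟶ B.pt.X := s.1
    have hs : ((A.α 1).1 ≫ ζ 1 A.pt) ≫ S.smpHom sv (𝟙 R)
        = sv ≫ ((B.α 1).1 ≫ ζ 1 B.pt) := s.2
    have heq : ∀ r, A.pt.act r ≫ sv = sv ≫ B.pt.act r := by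
      intro r
      rw [hactA A r, hactA B r]
      exact act_equivariant S _ _ sv hs r
    have hnat : ∀ n : ℕ, ((Qb n).map (⟨sv, heq⟩ : A.pt ⟶ B.pt)).1 ≫ ζ n B.pt
        = ζ n A.pt ≫ Qiter S n sv := fun n => hζ_nat n (⟨sv, heq⟩ : A.pt ⟶ B.pt)
    refine ⟨⟨⟨sv, heq⟩, fun n => Subtype.ext (hmono n B.pt _ _ ?_)⟩, Subtype.ext rfl⟩
    calc (sv ≫ (B.α n).1) ≫ ζ n B.pt
        = sv ≫ cIt S ((B.α 1).1 ≫ ζ 1 B.pt) n := by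
          rw [Category.assoc, halph B n]
      _ = cIt S ((A.α 1).1 ≫ ζ 1 A.pt) n ≫ Qiter S n sv :=
          cIt_map S _ _ sv hs n
      _ = ((A.α n).1 ≫ ζ n A.pt) ≫ Qiter S n sv := by rw [halph A n]
      _ = ((A.α n).1 ≫ ((Qb n).map (⟨sv, heq⟩ : A.pt ⟶ B.pt)).1) ≫ ζ n B.pt := by
          rw [Category.assoc, ← hnat n]
          simp [Category.assoc]
  · -- essential surjectivity
    intro B
    have hcoB := B.coassoc
    have hcuB := B.counit
    let Mb : EObject S :=
      ⟨B.X, fun r => actOf S B.coact r, actOf_id S B.coact B.counit,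
        fun r r' => actOf_comp S B.coact B.coassoc r r'⟩
    have hexists : ∀ n : ℕ, ∃ w : B.X ⟶ ((Qb n).obj Mb).X, w ≫ ζ n Mb = cIt S B.coact n := by
      intro n
      obtain ⟨w, hw, -⟩ := hζ_univ n Mb (cIt S B.coact n)
        (fun j r hj => cIt_equalizes S Mb B.coact hcoB (fun r => rfl) n j r hj)
      exact ⟨w, hw⟩
    choose w hw using hexists
    have hweq : ∀ (n : ℕ) (r : R ⟶ R),
        Mb.act r ≫ w n = w n ≫ ((Qb n).obj Mb).act r := by
      intro n r
      refine hmono n Mb _ _ ?_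
      calc (Mb.act r ≫ w n) ≫ ζ n Mb
          = Mb.act r ≫ cIt S B.coact n := by rw [Category.assoc, hw n]
        _ = cIt S B.coact n ≫ lamAt S n n Mb r :=
            act_cIt S Mb B.coact hcoB (fun _ => rfl) n r
        _ = w n ≫ ζ n Mb ≫ lamAt S n n Mb r := by rw [← hw n]; simp [Category.assoc]
        _ = (w n ≫ ((Qb n).obj Mb).act r) ≫ ζ n Mb := by
            rw [← hζ_act n Mb r]; simp [Category.assoc]
    refine ⟨⟨Mb, fun n => ⟨w n, hweq n⟩, ?_, ?_, ?_, ?_⟩, ⟨?_⟩⟩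
    · -- compat_d
      intro n i hi
      refine Subtype.ext (hmono (n+2) Mb _ _ ?_)
      calc (w (n+1) ≫ (Lc.d n i Mb).1) ≫ ζ (n+2) Mb
          = w (n+1) ≫ ζ (n+1) Mb ≫ dS S n i Mb.X := by
            rw [Category.assoc, hd n i Mb hi]
        _ = cIt S B.coact (n+1) ≫ dS S n i Mb.X := by
            rw [← Category.assoc, hw (n+1)]
        _ = cIt S B.coact (n+2) := cIt_dS S B.coact hcoB i n hi
        _ = w (n+2) ≫ ζ (n+2) Mb := (hw (n+2)).symm
    · -- compat_e
      intro n i hi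
      refine Subtype.ext (hmono n Mb _ _ ?_)
      calc (w (n+1) ≫ (Lc.e n i Mb).1) ≫ ζ n Mb
          = w (n+1) ≫ ζ (n+1) Mb ≫ eS S n i Mb.X := by
            rw [Category.assoc, he n i Mb hi]
        _ = cIt S B.coact (n+1) ≫ eS S n i Mb.X := by
            rw [← Category.assoc, hw (n+1)]
        _ = cIt S B.coact n := cIt_eS S B.coact hcoB hcuB i n hi
        _ = w n ≫ ζ n Mb := (hw n).symm
    · -- compat_ν
      intro m n
      have hmapval : ((Qb m).map (⟨w n, hweq n⟩ : Mb ⟶ (Qb n).obj Mb)).1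
            ≫ ζ m ((Qb n).obj Mb) = ζ m Mb ≫ Qiter S m (w n) :=
        hζ_nat m (⟨w n, hweq n⟩ : Mb ⟶ (Qb n).obj Mb)
      refine Subtype.ext (hmono (m+n) Mb _ _ ?_)
      calc (w m ≫ ((Qb m).map (⟨w n, hweq n⟩ : Mb ⟶ (Qb n).obj Mb)).1
              ≫ (Lc.ν m n Mb).1) ≫ ζ (m+n) Mb
          = w m ≫ ((Qb m).map (⟨w n, hweq n⟩ : Mb ⟶ (Qb n).obj Mb)).1
              ≫ ζ m ((Qb n).obj Mb) ≫ Qiter S m (ζ n Mb)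
              ≫ eqToHom (Qpow_comp S m n Mb.X) := by
            simp only [Category.assoc]
            rw [hν m n Mb]
        _ = w m ≫ ζ m Mb ≫ Qiter S m (w n) ≫ Qiter S m (ζ n Mb)
              ≫ eqToHom (Qpow_comp S m n Mb.X) := by
            rw [reassoc_of% hmapval]
        _ = w m ≫ ζ m Mb ≫ Qiter S m (w n ≫ ζ n Mb)
              ≫ eqToHom (Qpow_comp S m n Mb.X) := by
            rw [← reassoc_of% (Qiter_comp S m (w n) (ζ n Mb))]
        _ = cIt S B.coact m ≫ Qiter S m (cIt S B.coact n)
              ≫ eqToHom (Qpow_comp S m n Mb.X) := by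
            rw [reassoc_of% (hw m), hw n]
        _ = cIt S B.coact (m+n) := cIt_nu S B.coact m n _
        _ = w (m+n) ≫ ζ (m+n) Mb := (hw (m+n)).symm
    · -- compat_ι
      exact Subtype.ext (hmono 0 Mb _ _ ((hw 0).trans (hι Mb).symm))
    · -- the isomorphism
      refine ⟨⟨𝟙 B.X, ?_⟩, ⟨𝟙 B.X, ?_⟩,
        Subtype.ext (Category.id_comp (𝟙 B.X)), Subtype.ext (Category.id_comp (𝟙 B.X))⟩
      · exact iso_cond1 S (w 1) (ζ 1 Mb) B.coact ((hw 1).trans (cIt_one S B.coact))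
      · exact iso_cond2 S (w 1) (ζ 1 Mb) B.coact ((hw 1).trans (cIt_one S B.coact))
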